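/- arXiv:2105.05971 — 3 statements merged into one kernel-verified Lean document; each statement's English description precedes it below -/
import Mathlib

section
/- Let C be an n×n real matrix of determinant 1 such that the n² entries of C⁻¹ are linearly independent over Q. Then the set {CB − (CB)^t : B ∈ M_n(Z)} is dense in the space of real skew-symmetric n×n matrices. -/
open Matrix Submodule Set Module

theorem aux_rational_relation {E : Type*} [NormedAddCommGroup E] [NormedSpace ℝ E]
    [FiniteDimensional ℝ E] {ι : Type*} [Fintype ι] (g : ι → E) (v : ι → ℝ)
    (hv : LinearIndependent ℚ v)
    (hdisc : DiscreteTopology (Submodule.span ℤ (Set.range g)))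
    (hrel : ∑ i, v i • g i = 0) : ∀ i, g i = 0 := by
  classical
  set L : Submodule ℤ E := Submodule.span ℤ (Set.range g) with hL
  set F : Submodule ℝ E := Submodule.span ℝ (L : Set E) with hF
  let f := F.subtype
  let L₀ : Submodule ℤ ↥F := L.comap (f.restrictScalars ℤ)
  have h_img : f '' L₀ = L := by
    rw [← LinearMap.coe_restrictScalars ℤ f, ← Submodule.map_coe (f.restrictScalars ℤ),
      Submodule.map_comap_eq_self]
    exact fun x hx ↦ LinearMap.mem_range.mpr ⟨⟨x, Submodule.subset_span hx⟩, rfl⟩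
  haveI : DiscreteTopology L₀ := by
    refine DiscreteTopology.preimage_of_continuous_injective (L : Set E) ?_ (injective_subtype _)
    exact LinearMap.continuous_of_finiteDimensional f
  haveI : IsZLattice ℝ L₀ := ⟨by
    rw [← (Submodule.map_injective_of_injective (injective_subtype _)).eq_iff, Submodule.map_span,
      Submodule.map_top, range_subtype, h_img]⟩
  haveI : Module.Finite ℤ L₀ := ZLattice.module_finite ℝ L₀
  haveI : Module.Free ℤ L₀ := ZLattice.module_free ℝ L₀
  let b := Module.Free.chooseBasis ℤ L₀
  let bF := b.ofZLatticeBasis ℝ L₀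
  have hgF : ∀ i, g i ∈ F := fun i =>
    Submodule.subset_span (Submodule.subset_span (mem_range_self i))
  have hgL₀ : ∀ i, (⟨g i, hgF i⟩ : ↥F) ∈ L₀ := fun i =>
    Submodule.subset_span (mem_range_self i)
  let G' : ι → ↥L₀ := fun i => ⟨⟨g i, hgF i⟩, hgL₀ i⟩
  let c : ι → _ → ℤ := fun i j => b.repr (G' i) j
  let Φ : ↥L₀ →ₗ[ℤ] E := (F.subtype.restrictScalars ℤ) ∘ₗ L₀.subtype
  let bE : _ → E := fun j => Φ (b j)
  have hbEF : ∀ j, bE j = ((bF j : ↥F) : E) := by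
    intro j
    rw [show bF j = ((b j : ↥F) : ↥F) from b.ofZLatticeBasis_apply ℝ L₀ j]
    rfl
  have hbE : LinearIndependent ℝ bE := by
    have h := bF.linearIndependent.map' F.subtype (ker_subtype F)
    convert h using 1
    funext j
    exact hbEF j
    rfl
  have hgdecomp : ∀ i, g i = ∑ j, (c i j : ℝ) • bE j := by
    intro i
    have h1 : (∑ j, b.repr (G' i) j • b j) = G' i := b.sum_repr (G' i)
    have h2 : Φ (G' i) = g i := rfl
    rw [← h2, ← h1, map_sum]
    refine Finset.sum_congr rfl fun j _ => ?_
    rw [map_zsmul, Int.cast_smul_eq_zsmul]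
  -- swap the sum
  have hrel' : ∑ j, (∑ i, v i * (c i j : ℝ)) • bE j = 0 := by
    have hterm : ∀ i, v i • g i = ∑ j, (v i * (c i j : ℝ)) • bE j := by
      intro i
      rw [hgdecomp i, Finset.smul_sum]
      exact Finset.sum_congr rfl fun j _ => smul_smul _ _ _
    rw [← hrel, Finset.sum_congr rfl (fun i _ => hterm i), Finset.sum_comm]
    exact Finset.sum_congr rfl fun j _ => Finset.sum_smul
  have hcoef : ∀ j, ∑ i, v i * (c i j : ℝ) = 0 :=
    Fintype.linearIndependent_iff.mp hbE _ hrel'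
  have hc0 : ∀ i j, c i j = 0 := by
    intro i j
    have := Fintype.linearIndependent_iff.mp hv (fun i => (c i j : ℚ)) ?_ i
    · exact_mod_cast this
    · rw [← hcoef j]
      refine Finset.sum_congr rfl fun i _ => ?_
      rw [Rat.smul_def]
      push_cast
      ring
  intro i
  rw [hgdecomp i]
  simp [hc0 i]

theorem aux_dense_line_add_int {ι : Type*} [Fintype ι] [DecidableEq ι]
    (v : ι → ℝ) (hv : LinearIndependent ℚ v) :
    Dense {x : ι → ℝ | ∃ t : ℝ, ∃ m : ι → ℤ, x = t • v + fun i => (m i : ℝ)} := by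
  classical
  set S : Set (ι → ℝ) := {x | ∃ t : ℝ, ∃ m : ι → ℤ, x = t • v + fun i => (m i : ℝ)} with hS
  let G : AddSubgroup (ι → ℝ) :=
  { carrier := S
    zero_mem' := ⟨0, 0, by ext i; simp⟩
    add_mem' := by
      rintro x y ⟨t, m, rfl⟩ ⟨s, k, rfl⟩
      exact ⟨t + s, m + k, by ext i; simp [add_smul]; ring⟩
    neg_mem' := by
      rintro x ⟨t, m, rfl⟩
      exact ⟨-t, -m, by ext i; simp [add_smul]; ring⟩ }
  set H := G.topologicalClosure with hH
  have hHclosed : IsClosed (H : Set (ι → ℝ)) := G.isClosed_topologicalClosure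
  have hGH : ∀ x ∈ S, x ∈ H := fun x hx => G.le_topologicalClosure hx
  have hline : ∀ t : ℝ, t • v ∈ H := fun t => hGH _ ⟨t, 0, by ext i; simp⟩
  have hints : ∀ m : ι → ℤ, (fun i => (m i : ℝ)) ∈ H := fun m =>
    hGH _ ⟨0, m, by ext i; simp⟩
  -- the maximal subspace contained in H
  let V : Submodule ℝ (ι → ℝ) :=
  { carrier := {x | ∀ t : ℝ, t • x ∈ H}
    zero_mem' := fun t => by rw [smul_zero]; exact zero_mem H
    add_mem' := fun {x y} hx hy t => by rw [smul_add]; exact add_mem (hx t) (hy t)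
    smul_mem' := fun r x hx t => by rw [smul_smul]; exact hx (t * r) }
  have hVH : ∀ x ∈ V, x ∈ H := fun x hx => by simpa using hx 1
  have hvV : v ∈ V := fun t => hline t
  -- it suffices to show all standard basis vectors lie in V
  suffices hb : ∀ i, Pi.single i (1 : ℝ) ∈ V by
    have hVtop : ∀ x : ι → ℝ, x ∈ V := by
      intro x
      have hx : x = ∑ i, x i • (Pi.single i 1 : ι → ℝ) := by
        ext j; simp [Pi.single_apply, Finset.sum_apply]
      rw [hx]
      exact Submodule.sum_mem V fun i _ => Submodule.smul_mem V _ (hb i)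
    have : (H : Set (ι → ℝ)) = Set.univ := Set.eq_univ_of_forall fun x => hVH x (hVtop x)
    rw [dense_iff_closure_eq]
    have hcoe : (H : Set (ι → ℝ)) = closure S := rfl
    rw [← hcoe, this]
  -- set up the complement and projection
  obtain ⟨U, hUV⟩ := Submodule.exists_isCompl V
  let P := Submodule.projectionOnto U V hUV.symm
  let Q : (ι → ℝ) →ₗ[ℝ] (ι → ℝ) := U.subtype ∘ₗ P
  have hQU : ∀ x, Q x ∈ U := fun x => (P x).2
  have hkerV : ∀ x ∈ V, Q x = 0 := fun x hx => by
    simp only [Q, LinearMap.comp_apply]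
    rw [Submodule.projectionOnto_apply_of_mem_right hUV.symm hx]
    rfl
  have hsub : ∀ x, x - Q x ∈ V := by
    intro x
    have : P (x - Q x) = 0 := by
      rw [map_sub]
      have : P (Q x) = P x := Submodule.projectionOnto_apply_left hUV.symm (P x)
      rw [this, sub_self]
    exact (Submodule.projectionOnto_apply_eq_zero_iff hUV.symm).mp this
  have hQH : ∀ x ∈ H, Q x ∈ H := by
    intro x hx
    have : Q x = x - (x - Q x) := by ring_nf
    rw [this]
    exact sub_mem hx (hVH _ (hsub x))
  -- discreteness of H ∩ U
  have key : ∃ ε > 0, ∀ x ∈ H, x ∈ U → ‖x‖ < ε → x = 0 := by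
    by_contra hcon
    push_neg at hcon
    choose a haH haU han hane using fun n : ℕ =>
      hcon (1 / (n + 1)) (by positivity)
    have hanorm : ∀ n : ℕ, ‖a n‖ ≠ 0 := fun n => norm_ne_zero_iff.mpr (hane n)
    set u : ℕ → (ι → ℝ) := fun n => ‖a n‖⁻¹ • a n with hu
    have hus : ∀ n, u n ∈ Metric.sphere (0 : ι → ℝ) 1 := by
      intro n
      simp [u, norm_smul, inv_mul_cancel₀ (hanorm n)]
    obtain ⟨w, hw, φ, hφ, hconv⟩ :=
      (isCompact_sphere (0 : ι → ℝ) 1).tendsto_subseq hus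
    have hwnorm : ‖w‖ = 1 := by simpa using hw
    have hwU : w ∈ U := by
      refine (Submodule.closed_of_finiteDimensional U).mem_of_tendsto hconv ?_
      filter_upwards with n
      exact Submodule.smul_mem U _ (haU (φ n))
    have hnorm0 : Filter.Tendsto (fun n => ‖a (φ n)‖) Filter.atTop (nhds 0) := by
      refine squeeze_zero (fun n => norm_nonneg _) (fun n => (han (φ n)).le) ?_
      have h1 : Filter.Tendsto (fun n : ℕ => 1 / ((n : ℝ) + 1)) Filter.atTop (nhds 0) :=
        tendsto_one_div_add_atTop_nhds_zero_nat
      refine squeeze_zero (fun n => by positivity) (fun n => ?_) h1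
      have : (n : ℝ) + 1 ≤ (φ n : ℝ) + 1 := by
        have h2 : n ≤ φ n := hφ.le_apply
        have h3 : (n : ℝ) ≤ (φ n : ℝ) := Nat.cast_le.mpr h2
        linarith
      exact one_div_le_one_div_of_le (by positivity) this
    have hwV : w ∈ V := by
      intro t
      have hmem : ∀ n : ℕ, (⌊t / ‖a (φ n)‖⌋ : ℤ) • a (φ n) ∈ H ∧
          (⌊t / ‖a (φ n)‖⌋ : ℤ) • a (φ n) ∈ U := fun n =>
        ⟨zsmul_mem (haH (φ n)) _, zsmul_mem (haU (φ n)) _⟩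
      have hapos : ∀ n : ℕ, 0 < ‖a (φ n)‖ := fun n =>
        (norm_nonneg _).lt_of_ne' (hanorm (φ n))
      have heq : ∀ n : ℕ, (⌊t / ‖a (φ n)‖⌋ : ℤ) • a (φ n) =
          ((⌊t / ‖a (φ n)‖⌋ : ℝ) * ‖a (φ n)‖) • u (φ n) := by
        intro n
        rw [hu, smul_smul, mul_assoc, mul_inv_cancel₀ (hanorm (φ n)), mul_one,
          ← Int.cast_smul_eq_zsmul ℝ]
      have hsc : Filter.Tendsto
          (fun n => (⌊t / ‖a (φ n)‖⌋ : ℝ) * ‖a (φ n)‖) Filter.atTop (nhds t) := by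
        have hb : ∀ n : ℕ, ‖(⌊t / ‖a (φ n)‖⌋ : ℝ) * ‖a (φ n)‖ - t‖ ≤ ‖a (φ n)‖ := by
          intro n
          rw [Real.norm_eq_abs, abs_le]
          have h1 : (⌊t / ‖a (φ n)‖⌋ : ℝ) ≤ t / ‖a (φ n)‖ := Int.floor_le _
          have h2 : t / ‖a (φ n)‖ < (⌊t / ‖a (φ n)‖⌋ : ℝ) + 1 := Int.lt_floor_add_one _
          have h3 := (le_div_iff₀ (hapos n)).mp h1
          have h4 := (div_lt_iff₀ (hapos n)).mp h2
          rw [add_mul, one_mul] at h4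
          constructor <;> linarith
        have h0 : Filter.Tendsto
            (fun n => (⌊t / ‖a (φ n)‖⌋ : ℝ) * ‖a (φ n)‖ - t) Filter.atTop (nhds 0) :=
          squeeze_zero_norm hb hnorm0
        have := h0.add_const t
        simpa using this
      have hlim : Filter.Tendsto (fun n => (⌊t / ‖a (φ n)‖⌋ : ℤ) • a (φ n))
          Filter.atTop (nhds (t • w)) := by
        simp_rw [heq]
        exact hsc.smul hconv
      refine hHclosed.mem_of_tendsto hlim ?_
      filter_upwards with n
      exact (hmem n).1
    have : w = 0 := by
      exact Submodule.disjoint_def.mp hUV.disjoint w hwV hwU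
    rw [this] at hwnorm
    simp at hwnorm
  -- conclude using the rational relation lemma
  obtain ⟨ε, hε, hkey⟩ := key
  set g : ι → (ι → ℝ) := fun i => Q (Pi.single i 1) with hg
  have hsingleH : ∀ i, (Pi.single i 1 : ι → ℝ) ∈ H := by
    intro i
    have : (fun j => ((Pi.single i 1 : ι → ℤ) j : ℝ)) = (Pi.single i 1 : ι → ℝ) := by
      ext j
      by_cases h : j = i <;> simp [Pi.single_apply, h]
    rw [← this]
    exact hints _
  have hgHU : ∀ x ∈ Submodule.span ℤ (Set.range g), x ∈ H ∧ x ∈ U := by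
    intro x hx
    refine Submodule.span_induction ?_ ?_ ?_ ?_ hx
    · rintro y ⟨i, rfl⟩
      exact ⟨hQH _ (hsingleH i), hQU _⟩
    · exact ⟨zero_mem H, zero_mem U⟩
    · rintro y z _ _ ⟨hy1, hy2⟩ ⟨hz1, hz2⟩
      exact ⟨add_mem hy1 hz1, add_mem hy2 hz2⟩
    · rintro k y _ ⟨hy1, hy2⟩
      exact ⟨zsmul_mem hy1 k, zsmul_mem hy2 k⟩
  haveI hdisc : DiscreteTopology ↥(Submodule.span ℤ (Set.range g)) := by
    refine discreteTopology_iff_isOpen_singleton_zero.mpr ?_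
    rw [isOpen_induced_iff]
    refine ⟨Metric.ball 0 ε, Metric.isOpen_ball, ?_⟩
    ext ⟨x, hx⟩
    simp only [Set.mem_preimage, Metric.mem_ball, dist_zero_right, Set.mem_singleton_iff]
    constructor
    · intro hlt
      have := hkey x (hgHU x hx).1 (hgHU x hx).2 hlt
      exact Subtype.ext this
    · intro h
      have hx0 : x = 0 := congrArg Subtype.val h
      rw [hx0]
      simpa using hε
  have hrel : ∑ i, v i • g i = 0 := by
    have h1 : ∑ i, v i • g i = Q (∑ i, v i • (Pi.single i 1 : ι → ℝ)) := by
      rw [map_sum]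
      exact Finset.sum_congr rfl fun i _ => (map_smul Q _ _).symm
    have h2 : (∑ i, v i • (Pi.single i 1 : ι → ℝ)) = v := by
      ext j
      simp [Pi.single_apply, Finset.sum_apply, mul_comm]
    rw [h1, h2, hkerV v hvV]
  have hg0 := aux_rational_relation g v hv hdisc hrel
  intro i
  have h0 : Q (Pi.single i 1) = 0 := hg0 i
  have heq : (Pi.single i 1 : ι → ℝ) = Pi.single i 1 - Q (Pi.single i 1) := by
    rw [h0, sub_zero]
  rw [heq]
  exact hsub _

/-- Let `C` be an `n×n` real matrix of determinant `1` whose inverse has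
entries linearly independent over `ℚ`. Then `{CB − (CB)ᵀ : B ∈ M_n(ℤ)}` is dense in the
space of real skew-symmetric `n×n` matrices. -/
theorem dense_skew_parts_of_integer_multiples
    {n : ℕ} (C : Matrix (Fin n) (Fin n) ℝ) (hdet : C.det = 1)
    (hC : LinearIndependent ℚ (fun p : Fin n × Fin n => C⁻¹ p.1 p.2)) :
    ∀ D : Matrix (Fin n) (Fin n) ℝ, Dᵀ = -D →
      D ∈ closure { X : Matrix (Fin n) (Fin n) ℝ |
        ∃ B : Matrix (Fin n) (Fin n) ℤ,
          X = C * B.map (Int.cast : ℤ → ℝ) - (C * B.map (Int.cast : ℤ → ℝ))ᵀ } := by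
  intro D hD
  have hCinv : C * C⁻¹ = 1 := mul_nonsing_inv C (by rw [hdet]; exact isUnit_one)
  set v : Fin n × Fin n → ℝ := fun p => C⁻¹ p.1 p.2 with hv
  set S : Set (Fin n × Fin n → ℝ) :=
    {x | ∃ t : ℝ, ∃ m : Fin n × Fin n → ℤ, x = t • v + fun i => (m i : ℝ)} with hS
  have hdense : Dense S := aux_dense_line_add_int v hC
  -- the continuous map
  set Φ : (Fin n × Fin n → ℝ) → Matrix (Fin n) (Fin n) ℝ := fun x =>
    C * (Matrix.of fun i j => x (i, j)) - (C * (Matrix.of fun i j => x (i, j)))ᵀ with hΦ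
  have hofcont : Continuous fun x : Fin n × Fin n → ℝ =>
      (Matrix.of fun i j => x (i, j) : Matrix (Fin n) (Fin n) ℝ) :=
    continuous_matrix fun i j => continuous_apply (i, j)
  have hΦcont : Continuous Φ := by
    have h1 : Continuous fun x : Fin n × Fin n → ℝ =>
        C * (Matrix.of fun i j => x (i, j)) := continuous_const.matrix_mul hofcont
    exact h1.sub h1.matrix_transpose
  -- Φ maps S into the target set
  have hΦS : Φ '' S ⊆ { X : Matrix (Fin n) (Fin n) ℝ |
      ∃ B : Matrix (Fin n) (Fin n) ℤ,
        X = C * B.map (Int.cast : ℤ → ℝ) - (C * B.map (Int.cast : ℤ → ℝ))ᵀ } := by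
    rintro _ ⟨x, ⟨t, m, rfl⟩, rfl⟩
    refine ⟨Matrix.of fun i j => m (i, j), ?_⟩
    have hxof : (Matrix.of fun i j => ((t • v + fun i => (m i : ℝ)) (i, j)) :
        Matrix (Fin n) (Fin n) ℝ) =
        t • C⁻¹ + (Matrix.of fun i j => m (i, j)).map (Int.cast : ℤ → ℝ) := by
      ext i j
      simp [v, Matrix.map_apply, Pi.smul_apply]
    rw [hΦ]
    simp only
    rw [hxof, Matrix.mul_add, Matrix.mul_smul, hCinv]
    have h1t : ((t • (1 : Matrix (Fin n) (Fin n) ℝ)) +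
        C * (Matrix.of fun i j => m (i, j)).map (Int.cast : ℤ → ℝ))ᵀ =
        t • (1 : Matrix (Fin n) (Fin n) ℝ) +
          (C * (Matrix.of fun i j => m (i, j)).map (Int.cast : ℤ → ℝ))ᵀ := by
      rw [Matrix.transpose_add, Matrix.transpose_smul, Matrix.transpose_one]
    rw [h1t]
    abel
  -- the target point
  set x₀ : Fin n × Fin n → ℝ := fun p => (C⁻¹ * ((1/2 : ℝ) • D)) p.1 p.2 with hx₀
  have hΦx₀ : Φ x₀ = D := by
    have hof : (Matrix.of fun i j => x₀ (i, j)) = C⁻¹ * ((1/2 : ℝ) • D) := by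
      ext i j; rfl
    rw [hΦ]
    simp only
    rw [hof, ← Matrix.mul_assoc, hCinv, Matrix.one_mul, Matrix.transpose_smul, hD]
    ext i j
    simp
    ring
  have hx₀mem : x₀ ∈ closure S := by
    rw [hdense.closure_eq]; trivial
  have := image_closure_subset_closure_image hΦcont (s := S) ⟨x₀, hx₀mem, rfl⟩
  rw [hΦx₀] at this
  exact closure_mono hΦS this
end

section
/- The set of matrices C ∈ SL(n,R) such that the entries of C⁻¹ are linearly independent over Q is dense in SL(n,R). -/
open Matrix Filter Topology

section Aux

attribute [local instance] Matrix.normedAddCommGroup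

variable {n : ℕ}

/-- The linear functional on matrices given by coefficient matrix `Q`. -/
noncomputable def phiAux (Q A : Matrix (Fin n) (Fin n) ℝ) : ℝ :=
  ∑ p : Fin n × Fin n, Q p.1 p.2 * A p.1 p.2

lemma phiAux_eq_trace (Q A : Matrix (Fin n) (Fin n) ℝ) :
    phiAux Q A = ∑ k, (Q * Aᵀ) k k := by
  rw [phiAux, Fintype.sum_prod_type]
  apply Finset.sum_congr rfl
  intro k _
  rw [Matrix.mul_apply]
  apply Finset.sum_congr rfl
  intro l _
  simp [Matrix.transpose_apply]

lemma closure_curve {B : Matrix (Fin n) (Fin n) ℝ} {W : Set (Matrix (Fin n) (Fin n) ℝ)}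
    (c : ℝ → Matrix (Fin n) (Fin n) ℝ) (hc : Continuous c) (h0 : c 0 = B)
    (s : Set ℝ) (hs : (𝓝[s] (0:ℝ)).NeBot) (hW : ∀ t ∈ s, c t ∈ W) :
    B ∈ closure W := by
  have h1 : Tendsto c (𝓝[s] 0) (𝓝 B) := h0 ▸ (hc.tendsto 0).mono_left nhdsWithin_le_nhds
  exact mem_closure_of_tendsto h1 (Filter.Eventually.mono self_mem_nhdsWithin hW)

lemma algAux {a b t : ℝ} (ht : 0 < t) (hab : a ≠ b)
    (h1 : a * (Real.exp t - 1) + b * (Real.exp (-t) - 1) = 0) :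
    a * (Real.exp (2*t) - 1) + b * (Real.exp (-(2*t)) - 1) ≠ 0 := by
  intro h2
  set x := Real.exp t with hxdef
  have hxpos : 0 < x := Real.exp_pos t
  have hx1 : 1 < x := by
    rw [hxdef]
    calc (1:ℝ) = Real.exp 0 := (Real.exp_zero).symm
    _ < Real.exp t := Real.exp_lt_exp.mpr ht
  have he : Real.exp (-t) = x⁻¹ := Real.exp_neg t
  have h2t : Real.exp (2*t) = x^2 := by rw [two_mul, Real.exp_add]; ring
  have h2t' : Real.exp (-(2*t)) = (x^2)⁻¹ := by rw [Real.exp_neg, h2t]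
  rw [he] at h1
  rw [h2t, h2t'] at h2
  have hx0 : x ≠ 0 := ne_of_gt hxpos
  have hxm1 : x - 1 ≠ 0 := by intro h; apply absurd hx1; rw [show x = 1 by linarith]; simp
  have e1 : (x - 1) * (a * x - b) = 0 := by
    have := congrArg (· * x) h1
    field_simp at this
    nlinarith [this]
  have hb : b = a * x := by
    rcases mul_eq_zero.mp e1 with h | h
    · exact absurd h hxm1
    · linarith
  have e2 : (x^2 - 1) * (a * x^2 - b) = 0 := by
    have := congrArg (· * x^2) h2
    field_simp at this
    nlinarith [this]
  have hx2m1 : x^2 - 1 ≠ 0 := by nlinarith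
  have hb2 : b = a * x^2 := by
    rcases mul_eq_zero.mp e2 with h | h
    · exact absurd h hx2m1
    · linarith
  have ha : a = 0 := by
    have : a * x * (x - 1) = 0 := by nlinarith
    rcases mul_eq_zero.mp this with h | h
    · rcases mul_eq_zero.mp h with h' | h'
      · exact h'
      · exact absurd h' hx0
    · exact absurd h hxm1
  apply hab
  rw [ha] at hb ⊢
  rw [hb]; ring

lemma case1Aux (Q B : Matrix (Fin n) (Fin n) ℝ) (hB : B.det = 1) (hf : phiAux Q B = 0)
    (i j : Fin n) (hij : i ≠ j) (hs : (Q * Bᵀ) i j ≠ 0) :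
    B ∈ closure {A : Matrix (Fin n) (Fin n) ℝ | A.det = 1 ∧ phiAux Q A ≠ 0} := by
  set E := Matrix.single i j (1:ℝ) with hE
  have key : ∀ t : ℝ, B + t • (E * B) = Matrix.transvection i j t * B := by
    intro t
    rw [Matrix.transvection, Matrix.add_mul, Matrix.one_mul, ← Matrix.smul_mul, hE,
      Matrix.smul_single, smul_eq_mul, mul_one]
  have hEB : ∀ k l, (E * B) k l = if k = i then B j l else 0 := by
    intro k l
    by_cases h : k = i
    · subst h; simp [hE]
    · simp [hE, Matrix.single_mul_apply_of_ne, h]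
  have hphiEB : phiAux Q (E * B) = (Q * Bᵀ) i j := by
    rw [phiAux, Fintype.sum_prod_type]
    have : ∀ k : Fin n, ∑ l, Q k l * (E * B) k l
        = if k = i then (∑ l, Q i l * B j l) else 0 := by
      intro k
      by_cases h : k = i
      · subst h; simp [hEB]
      · simp [hEB, h]
    rw [Finset.sum_congr rfl (fun k _ => this k)]
    simp [Matrix.mul_apply, Matrix.transpose_apply]
  have hphit : ∀ t : ℝ, phiAux Q (B + t • (E * B)) = t * (Q * Bᵀ) i j := by
    intro t
    have : phiAux Q (B + t • (E * B)) = phiAux Q B + t * phiAux Q (E * B) := by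
      simp [phiAux, Matrix.add_apply, Matrix.smul_apply, smul_eq_mul, mul_add,
        Finset.sum_add_distrib, Finset.mul_sum]
      exact Finset.sum_congr rfl fun p _ => by ring
    rw [this, hf, hphiEB, zero_add]
  refine closure_curve (fun t => B + t • (E * B)) ?_ (by simp) {0}ᶜ ?_ ?_
  · exact continuous_const.add (continuous_id.smul continuous_const)
  · exact inferInstance
  · intro t ht
    simp only [Set.mem_setOf_eq]
    refine ⟨?_, ?_⟩
    · rw [key, Matrix.det_mul, Matrix.det_transvection_of_ne i j hij, hB, one_mul]
    · rw [hphit]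
      exact mul_ne_zero ht hs

lemma case2Aux (Q B : Matrix (Fin n) (Fin n) ℝ) (hB : B.det = 1) (hf : phiAux Q B = 0)
    (i j : Fin n) (hij : i ≠ j) (hab : (Q * Bᵀ) i i ≠ (Q * Bᵀ) j j) :
    B ∈ closure {A : Matrix (Fin n) (Fin n) ℝ | A.det = 1 ∧ phiAux Q A ≠ 0} := by
  set a := (Q * Bᵀ) i i with ha
  set b := (Q * Bᵀ) j j with hb
  set g : Fin n → ℝ := fun k => if k = i then 1 else if k = j then -1 else 0 with hg
  set c : ℝ → Matrix (Fin n) (Fin n) ℝ :=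
    fun t => Matrix.diagonal (fun k => Real.exp (t * g k)) * B with hc
  have hgsplit : ∀ k, g k = (if k = i then (1:ℝ) else 0) + (if k = j then (-1:ℝ) else 0) := by
    intro k
    by_cases h : k = i
    · subst h; simp [hg, hij]
    · by_cases h' : k = j <;> simp [hg, h, h', Ne.symm hij]
  have hgsum : ∑ k, g k = 0 := by
    rw [Finset.sum_congr rfl fun k _ => hgsplit k, Finset.sum_add_distrib,
      Finset.sum_ite_eq' Finset.univ i (fun _ => (1:ℝ)),
      Finset.sum_ite_eq' Finset.univ j (fun _ => (-1:ℝ))]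
    simp
  have hdet : ∀ t, (c t).det = 1 := by
    intro t
    rw [hc]
    simp only [Matrix.det_mul, Matrix.det_diagonal, hB, mul_one]
    rw [← Real.exp_sum]
    rw [← Finset.mul_sum, hgsum, mul_zero, Real.exp_zero]
  have hphi : ∀ t, phiAux Q (c t)
      = a * (Real.exp t - 1) + b * (Real.exp (-t) - 1) := by
    intro t
    have h1 : phiAux Q (c t) = ∑ k, Real.exp (t * g k) * (Q * Bᵀ) k k := by
      rw [phiAux, Fintype.sum_prod_type]
      apply Finset.sum_congr rfl
      intro k _
      rw [Matrix.mul_apply]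
      simp only [hc, Matrix.diagonal_mul, Matrix.transpose_apply]
      rw [Finset.mul_sum]
      apply Finset.sum_congr rfl
      intro l _
      ring
    have h2 : ∀ k, Real.exp (t * g k) * (Q * Bᵀ) k k - (Q * Bᵀ) k k
        = (if k = i then a * (Real.exp t - 1) else 0)
          + (if k = j then b * (Real.exp (-t) - 1) else 0) := by
      intro k
      by_cases h : k = i
      · subst h; simp [hg, hij, ha, mul_one]; ring
      · by_cases h' : k = j
        · subst h'; simp [hg, h, hb]; ring
        · simp [hg, h, h']
    have h3 : ∑ k, (Q * Bᵀ) k k = 0 := by rw [← phiAux_eq_trace, hf]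
    calc phiAux Q (c t) = ∑ k, (Real.exp (t * g k) * (Q * Bᵀ) k k - (Q * Bᵀ) k k) := by
          rw [Finset.sum_sub_distrib, h3, sub_zero, h1]
    _ = a * (Real.exp t - 1) + b * (Real.exp (-t) - 1) := by
          rw [Finset.sum_congr rfl fun k _ => h2 k, Finset.sum_add_distrib,
            Finset.sum_ite_eq' Finset.univ i, Finset.sum_ite_eq' Finset.univ j]
          simp
  set s : Set ℝ := {t | phiAux Q (c t) ≠ 0} with hsdef
  have hne : (𝓝[s] (0:ℝ)).NeBot := by
    rw [← mem_closure_iff_nhdsWithin_neBot, Metric.mem_closure_iff]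
    intro ε hε
    by_cases h : phiAux Q (c (ε/3)) ≠ 0
    · exact ⟨ε/3, h, by rw [Real.dist_eq, abs_of_nonpos (by linarith)]; linarith⟩
    · push_neg at h
      refine ⟨2*(ε/3), ?_, ?_⟩
      · show phiAux Q (c (2*(ε/3))) ≠ 0
        rw [hphi]
        rw [hphi] at h
        exact algAux (by linarith) hab h
      · rw [Real.dist_eq, abs_of_nonpos (by linarith)]; linarith
  refine closure_curve c ?_ ?_ s hne ?_
  · rw [hc]
    apply continuous_matrix
    intro k l
    simp only [Matrix.diagonal_mul]
    fun_prop
  · rw [hc]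
    ext k l
    simp [Matrix.diagonal_mul]
  · intro t ht
    exact ⟨hdet t, ht⟩

/-- Density of the complement of a single rational hyperplane in `SL(n, ℝ)`. -/
lemma dense_ne_aux (Q : Matrix (Fin n) (Fin n) ℝ) (hQ : Q ≠ 0)
    (B : Matrix (Fin n) (Fin n) ℝ) (hB : B.det = 1) :
    B ∈ closure {A : Matrix (Fin n) (Fin n) ℝ | A.det = 1 ∧ phiAux Q A ≠ 0} := by
  by_cases hf : phiAux Q B ≠ 0
  · exact subset_closure ⟨hB, hf⟩
  push_neg at hf
  by_cases h1 : ∃ i j, i ≠ j ∧ (Q * Bᵀ) i j ≠ 0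
  · obtain ⟨i, j, hij, hs⟩ := h1
    exact case1Aux Q B hB hf i j hij hs
  by_cases h2 : ∃ i j, i ≠ j ∧ (Q * Bᵀ) i i ≠ (Q * Bᵀ) j j
  · obtain ⟨i, j, hij, hab⟩ := h2
    exact case2Aux Q B hB hf i j hij hab
  -- contradiction case : Q = 0
  exfalso
  push_neg at h1 h2
  rcases Nat.eq_zero_or_pos n with hn | hn
  · apply hQ
    ext i jj
    exact absurd i.2 (by omega)
  have i0 : Fin n := ⟨0, hn⟩
  have hdiag : ∀ k, (Q * Bᵀ) k k = (Q * Bᵀ) i0 i0 := by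
    intro k
    by_cases h : k = i0
    · rw [h]
    · exact h2 k i0 h
  have hsum : (n : ℝ) * (Q * Bᵀ) i0 i0 = 0 := by
    have : ∑ k, (Q * Bᵀ) k k = (n : ℝ) * (Q * Bᵀ) i0 i0 := by
      rw [Finset.sum_congr rfl fun k _ => hdiag k, Finset.sum_const, Finset.card_univ,
        Fintype.card_fin, nsmul_eq_mul]
    rw [← this, ← phiAux_eq_trace, hf]
  have hdiag0 : (Q * Bᵀ) i0 i0 = 0 := by
    have hnne : (n : ℝ) ≠ 0 := Nat.cast_ne_zero.mpr (by omega)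
    exact (mul_eq_zero.mp hsum).resolve_left hnne
  have hS0 : Q * Bᵀ = 0 := by
    ext k l
    by_cases h : k = l
    · subst h
      rw [hdiag k, hdiag0, Matrix.zero_apply]
    · rw [h1 k l h, Matrix.zero_apply]
  apply hQ
  have hBt : IsUnit Bᵀ.det := by rw [Matrix.det_transpose, hB]; exact isUnit_one
  calc Q = Q * (Bᵀ * Bᵀ⁻¹) := by rw [Matrix.mul_nonsing_inv _ hBt, Matrix.mul_one]
  _ = (Q * Bᵀ) * Bᵀ⁻¹ := by rw [Matrix.mul_assoc]
  _ = 0 := by rw [hS0, Matrix.zero_mul]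

/-- Density of matrices with `ℚ`-linearly independent entries in `SL(n, ℝ)`. -/
lemma dense_li_aux (B : Matrix (Fin n) (Fin n) ℝ) (hB : B.det = 1) :
    B ∈ closure {A : Matrix (Fin n) (Fin n) ℝ | A.det = 1 ∧
      LinearIndependent ℚ (fun p : Fin n × Fin n => A p.1 p.2)} := by
  have hcl : IsClosed {A : Matrix (Fin n) (Fin n) ℝ | A.det = 1} :=
    isClosed_eq (Continuous.matrix_det continuous_id) continuous_const
  haveI : CompleteSpace {A : Matrix (Fin n) (Fin n) ℝ // A.det = 1} := hcl.completeSpace_coe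
  haveI : LocallyCompactSpace (Matrix (Fin n) (Fin n) ℝ) :=
    inferInstanceAs (LocallyCompactSpace (Fin n → Fin n → ℝ))
  haveI : LocallyCompactSpace {A : Matrix (Fin n) (Fin n) ℝ // A.det = 1} := hcl.locallyCompactSpace
  haveI : BaireSpace {A : Matrix (Fin n) (Fin n) ℝ // A.det = 1} :=
    BaireSpace.of_t2Space_locallyCompactSpace
  let U : {q : Fin n × Fin n → ℚ // q ≠ 0} → Set {A : Matrix (Fin n) (Fin n) ℝ // A.det = 1} :=
    fun q => {x | phiAux (Matrix.of fun i j => ((q.1 (i, j) : ℝ))) x.1 ≠ 0}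
  have hUopen : ∀ q, IsOpen (U q) := by
    intro q
    have hcont : Continuous fun x : {A : Matrix (Fin n) (Fin n) ℝ // A.det = 1} =>
        phiAux (Matrix.of fun i j => ((q.1 (i, j) : ℝ))) x.1 := by
      apply continuous_finset_sum
      intro p _
      exact continuous_const.mul
        (((continuous_apply _).comp ((continuous_apply _).comp continuous_subtype_val)))
    exact isOpen_ne.preimage hcont
  have hUdense : ∀ q, Dense (U q) := by
    intro q
    intro x
    rw [closure_subtype]
    have hQr : (Matrix.of fun i j => ((q.1 (i, j) : ℝ))) ≠ 0 := by
      intro h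
      apply q.2
      funext p
      have := congrFun (congrFun h p.1) p.2
      simpa using this
    refine closure_mono ?_ (dense_ne_aux _ hQr x.1 x.2)
    rintro A ⟨hA1, hA2⟩
    exact ⟨⟨A, hA1⟩, hA2, rfl⟩
  have hdense : Dense (⋂ q, U q) := dense_iInter_of_isOpen hUopen hUdense
  have hx : (⟨B, hB⟩ : {A : Matrix (Fin n) (Fin n) ℝ // A.det = 1}) ∈ closure (⋂ q, U q) :=
    hdense _
  rw [closure_subtype] at hx
  refine closure_mono ?_ hx
  rintro A ⟨x, hxmem, rfl⟩
  refine ⟨x.2, ?_⟩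
  rw [Fintype.linearIndependent_iff]
  intro g hg
  by_contra hgz
  push_neg at hgz
  obtain ⟨p0, hp0⟩ := hgz
  have hgne : g ≠ 0 := fun h => hp0 (by rw [h]; rfl)
  have hxU := Set.mem_iInter.mp hxmem ⟨g, hgne⟩
  apply hxU
  rw [phiAux]
  rw [← hg]
  apply Finset.sum_congr rfl
  intro p _
  rw [Rat.smul_def]
  simp

end Aux

/-- The set of `C ∈ SL(n,ℝ)` whose inverse has entries linearly
independent over `ℚ` is dense in `SL(n,ℝ)` (i.e. in `{C : det C = 1}` with the standard
topology on matrices). -/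
theorem dense_irrational_inverse_in_SL
    {n : ℕ} (C : Matrix (Fin n) (Fin n) ℝ) (hdet : C.det = 1) :
    C ∈ closure { C' : Matrix (Fin n) (Fin n) ℝ |
      C'.det = 1 ∧ LinearIndependent ℚ (fun p : Fin n × Fin n => C'⁻¹ p.1 p.2) } := by
  have hD : (C⁻¹).det = 1 := by
    rw [Matrix.det_nonsing_inv, hdet, Ring.inverse_one]
  have hcont : ContinuousAt (fun A : Matrix (Fin n) (Fin n) ℝ => A.adjugate) C⁻¹ :=
    (Continuous.matrix_adjugate continuous_id).continuousAt
  have hcl := mem_closure_image hcont (dense_li_aux C⁻¹ hD)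
  have hadj : (C⁻¹).adjugate = C := by
    have h1 : (C⁻¹)⁻¹ = C := Matrix.nonsing_inv_nonsing_inv C (by rw [hdet]; exact isUnit_one)
    have h2 : (C⁻¹)⁻¹ = (C⁻¹).adjugate := by
      rw [Matrix.inv_def, hD, Ring.inverse_one, one_smul]
    rw [← h2, h1]
  rw [hadj] at hcl
  refine closure_mono ?_ hcl
  rintro A ⟨A0, ⟨h1, h2⟩, rfl⟩
  have hd : A0.adjugate.det = 1 := by
    rw [Matrix.det_adjugate, h1, one_pow]
  refine ⟨hd, ?_⟩
  have hinv : A0.adjugate = A0⁻¹ := by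
    rw [Matrix.inv_def, h1, Ring.inverse_one, one_smul]
  have h3 : (A0.adjugate)⁻¹ = A0 := by
    rw [hinv, Matrix.nonsing_inv_nonsing_inv _ (by rw [h1]; exact isUnit_one)]
  rw [h3]
  exact h2
end

section
/- Let l, l' be the coordinate n-planes spanned by the first n and last n standard basis vectors of R^{2n} respectively. The union of the orbits, under the group G_Λ of integer matrices of the block form (I B; 0 A) with A ∈ SL(n,Z), B ∈ M_n(Z) (acting by ω ↦ g^t ω g on bilinear forms), of the antisymmetric forms with matrix (0 −C^t; C 0) for C ∈ SL(n,R), is dense in the set of antisymmetric forms with matrix (0 −C^t; C D) where C ∈ SL(n,R) and D is skew-symmetric. -/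
open Matrix
set_option maxHeartbeats 2000000

open Filter in
private lemma round_div_tendsto' (c : ℝ) :
    Tendsto (fun N : ℕ => ((N:ℝ))⁻¹ * ((round ((N:ℝ) * c) : ℤ) : ℝ)) atTop (nhds c) := by
  rw [← tendsto_sub_nhds_zero_iff]
  have hg : Tendsto (fun N : ℕ => ((N:ℝ))⁻¹ * 2⁻¹) atTop (nhds 0) := by
    simpa using (tendsto_inv_atTop_zero.comp tendsto_natCast_atTop_atTop).mul_const (2⁻¹:ℝ)
  apply squeeze_zero_norm' ?_ hg
  filter_upwards [eventually_ge_atTop 1] with N hN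
  have hN0 : ((N:ℝ)) ≠ 0 := by
    have : (1:ℝ) ≤ (N:ℝ) := by exact_mod_cast hN
    linarith
  have h1 : ((N:ℝ))⁻¹ * ((round ((N:ℝ) * c) : ℤ) : ℝ) - c
      = ((N:ℝ))⁻¹ * (((round ((N:ℝ) * c) : ℤ) : ℝ) - (N:ℝ) * c) := by
    field_simp
  rw [Real.norm_eq_abs, h1, abs_mul]
  have h2 : |(((round ((N:ℝ) * c) : ℤ) : ℝ) - (N:ℝ) * c)| ≤ 2⁻¹ := by
    rw [abs_sub_comm]
    simpa [one_div] using abs_sub_round ((N:ℝ) * c)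
  have h3 : |((N:ℝ))⁻¹| = ((N:ℝ))⁻¹ := abs_of_nonneg (by positivity)
  rw [h3]
  exact mul_le_mul_of_nonneg_left h2 (by positivity)

private lemma cofactor_ne_zero' {m : ℕ} (C : Matrix (Fin (m+1)) (Fin (m+1)) ℝ) (hC : C.det = 1) :
    (updateRow (C * Cᵀ) 0 (Pi.single 0 1)).det ≠ 0 := by
  intro h
  obtain ⟨v, hv0, hv⟩ := (Matrix.exists_mulVec_eq_zero_iff).mpr h
  have hC' : IsUnit (Cᵀ).det := by simp [Matrix.det_transpose, hC]
  have h0 : v 0 = 0 := by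
    have := congrFun hv 0
    simpa [Matrix.mulVec, Matrix.updateRow_apply, single_dotProduct] using this
  have hrow : ∀ i : Fin (m+1), i ≠ 0 → ((C * Cᵀ) *ᵥ v) i = 0 := by
    intro i hi
    have := congrFun hv i
    simpa [Matrix.mulVec, Matrix.updateRow_apply, hi] using this
  have hdot : v ⬝ᵥ ((C * Cᵀ) *ᵥ v) = 0 := by
    rw [dotProduct]
    apply Finset.sum_eq_zero
    intro i _
    by_cases hi : i = 0
    · subst hi; rw [h0, zero_mul]
    · rw [hrow i hi, mul_zero]
  have hw : (Cᵀ *ᵥ v) ⬝ᵥ (Cᵀ *ᵥ v) = 0 := by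
    have heq : v ⬝ᵥ ((C * Cᵀ) *ᵥ v) = (Cᵀ *ᵥ v) ⬝ᵥ (Cᵀ *ᵥ v) := by
      rw [← Matrix.mulVec_mulVec, Matrix.dotProduct_mulVec, ← Matrix.mulVec_transpose]
    rw [← heq]; exact hdot
  have hw0 : Cᵀ *ᵥ v = 0 := dotProduct_self_eq_zero.mp hw
  have hveq : v = 0 := by
    have h1 : (Cᵀ)⁻¹ *ᵥ (Cᵀ *ᵥ v) = v := by
      rw [Matrix.mulVec_mulVec, Matrix.nonsing_inv_mul _ hC', Matrix.one_mulVec]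
    rw [hw0, Matrix.mulVec_zero] at h1
    exact h1.symm
  exact hv0 hveq

set_option maxHeartbeats 2000000 in
/-- In `2n×2n` block form, with `l`, `l'` the first and last coordinate
`n`-planes: the union of the orbits, under the group `G_Λ` of integer block matrices
`(I B; 0 A)` (`A ∈ SL(n,ℤ)`, `B ∈ M_n(ℤ)`) acting by `ω ↦ gᵀ ω g`, of the
`(l,l')`-Lagrangian split forms `(0 −Cᵀ; C 0)` (`C ∈ SL(n,ℝ)`) is dense in the set of
forms `(0 −Cᵀ; C D)` with `C ∈ SL(n,ℝ)` and `D` skew-symmetric. -/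
theorem dense_GLambda_orbits_of_lagrangian_split_forms
    {n : ℕ} :
    ∀ (C : Matrix (Fin n) (Fin n) ℝ) (D : Matrix (Fin n) (Fin n) ℝ),
      C.det = 1 → Dᵀ = -D →
      Matrix.fromBlocks 0 (-Cᵀ) C D ∈
        closure { X : Matrix (Fin n ⊕ Fin n) (Fin n ⊕ Fin n) ℝ |
          ∃ (C' : Matrix (Fin n) (Fin n) ℝ) (A B : Matrix (Fin n) (Fin n) ℤ),
            C'.det = 1 ∧ A.det = 1 ∧
            X = (Matrix.fromBlocks 1 (B.map (Int.cast : ℤ → ℝ)) 0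
                    (A.map (Int.cast : ℤ → ℝ)))ᵀ *
                  Matrix.fromBlocks 0 (-C'ᵀ) C' 0 *
                  Matrix.fromBlocks 1 (B.map (Int.cast : ℤ → ℝ)) 0
                    (A.map (Int.cast : ℤ → ℝ)) } := by
  classical
  intro C D hC hD
  rcases n.eq_zero_or_pos with hn | hn
  · subst hn
    apply subset_closure
    refine ⟨C, 1, 0, hC, Matrix.det_one, ?_⟩
    ext i j
    exact isEmptyElim i
  obtain ⟨m, rfl⟩ : ∃ m, n = m + 1 := ⟨n - 1, (Nat.succ_pred_eq_of_pos hn).symm⟩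
  open Filter in
  -- the integer matrices approximating `N • Cᵀ`
  set Bz : ℕ → Matrix (Fin (m+1)) (Fin (m+1)) ℤ :=
    fun N => Matrix.of fun i j => round ((N:ℝ) * C j i) with hBz
  set Br : ℕ → Matrix (Fin (m+1)) (Fin (m+1)) ℝ :=
    fun N => (Bz N).map (Int.cast : ℤ → ℝ) with hBr
  set Br' : ℕ → Matrix (Fin (m+1)) (Fin (m+1)) ℝ := fun N => ((N:ℝ))⁻¹ • Br N with hBr'
  have T1 : Tendsto Br' atTop (nhds Cᵀ) := by
    apply tendsto_pi_nhds.mpr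
    intro i
    apply tendsto_pi_nhds.mpr
    intro j
    simpa [Br', Br, Bz] using round_div_tendsto' (C j i)
  have hCT : (Cᵀ).det = 1 := by rw [Matrix.det_transpose, hC]
  have hdetcont : Continuous fun A : Matrix (Fin (m+1)) (Fin (m+1)) ℝ => A.det :=
    continuous_id.matrix_det
  have T2 : Tendsto (fun N => (Br' N).det) atTop (nhds 1) := by
    have := (hdetcont.tendsto Cᵀ).comp T1
    simpa [hCT, Function.comp_def] using this
  set M₀ : ℕ → Matrix (Fin (m+1)) (Fin (m+1)) ℝ :=
    fun N => (2:ℝ)⁻¹ • (C * Br N + (C * Br N)ᵀ + D) with hM₀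
  set M₀' : ℕ → Matrix (Fin (m+1)) (Fin (m+1)) ℝ := fun N => ((N:ℝ))⁻¹ • M₀ N with hM₀'
  have hM₀'eq : ∀ N : ℕ,
      M₀' N = (2:ℝ)⁻¹ • (C * Br' N + (C * Br' N)ᵀ + ((N:ℝ))⁻¹ • D) := by
    intro N
    ext i j
    simp [M₀', M₀, Br', Matrix.mul_smul, Matrix.smul_apply, Matrix.add_apply,
      Matrix.transpose_apply]
    ring
  have T3 : Tendsto M₀' atTop (nhds (C * Cᵀ)) := by
    have h1 : Tendsto (fun N => C * Br' N) atTop (nhds (C * Cᵀ)) :=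
      ((continuous_const.matrix_mul continuous_id).tendsto Cᵀ).comp T1
    have h2 : Tendsto (fun N => (C * Br' N)ᵀ) atTop (nhds ((C * Cᵀ)ᵀ)) :=
      ((continuous_id.matrix_transpose).tendsto (C * Cᵀ)).comp h1
    have h3 : Tendsto (fun N : ℕ => ((N:ℝ))⁻¹ • D) atTop (nhds 0) := by
      have h4 : Tendsto (fun N : ℕ => ((N:ℝ))⁻¹) atTop (nhds 0) :=
        tendsto_inv_atTop_zero.comp tendsto_natCast_atTop_atTop
      simpa using h4.smul_const D
    have h5 := (((h1.add h2).add h3).const_smul ((2:ℝ)⁻¹)).congr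
      (fun N => (hM₀'eq N).symm)
    have h6 : (2:ℝ)⁻¹ • (C * Cᵀ + (C * Cᵀ)ᵀ + 0) = C * Cᵀ := by
      rw [add_zero, Matrix.transpose_mul, Matrix.transpose_transpose, ← two_smul ℝ,
        smul_smul]
      norm_num
    rwa [h6] at h5
  set e : Fin (m+1) → ℝ := Pi.single 0 1 with he
  set κ : ℕ → ℝ := fun N => ((M₀ N).updateRow 0 e).det with hκdef
  set κ' : ℕ → ℝ := fun N => ((M₀' N).updateRow 0 e).det with hκ'def
  have hκ'N : ∀ N, κ' N = ((N:ℝ))⁻¹ ^ m * κ N := by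
    intro N
    have := Matrix.det_updateRow_smul_left (M₀ N) 0 ((N:ℝ))⁻¹ e
    simpa [κ', κ, M₀', Fintype.card_fin] using this
  set a : ℝ := ((C * Cᵀ).updateRow 0 e).det with ha_def
  have T4 : Tendsto κ' atTop (nhds a) := by
    have hcont : Continuous fun A : Matrix (Fin (m+1)) (Fin (m+1)) ℝ =>
        (A.updateRow 0 e).det :=
      (continuous_id.matrix_updateRow 0 continuous_const).matrix_det
    exact (hcont.tendsto (C * Cᵀ)).comp T3
  have ha : a ≠ 0 := cofactor_ne_zero' C hC
  have E1 : ∀ᶠ N in atTop, (Br' N).det ≠ 0 := T2.eventually_ne one_ne_zero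
  have E2 : ∀ᶠ N in atTop, κ' N ≠ 0 := T4.eventually_ne ha
  set s : ℕ → ℝ := fun N => ((Br N).det - (M₀ N).det) / κ N with hs
  have hdetBr' : ∀ N : ℕ, (Br' N).det = ((N:ℝ))⁻¹ ^ (m+1) * (Br N).det := by
    intro N
    simpa [Br', Fintype.card_fin] using Matrix.det_smul (Br N) ((N:ℝ))⁻¹
  have hdetM₀' : ∀ N : ℕ, (M₀' N).det = ((N:ℝ))⁻¹ ^ (m+1) * (M₀ N).det := by
    intro N
    simpa [M₀', Fintype.card_fin] using Matrix.det_smul (M₀ N) ((N:ℝ))⁻¹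
  have hsN : ∀ N : ℕ, 1 ≤ N → s N / (N:ℝ) = ((Br' N).det - (M₀' N).det) / κ' N := by
    intro N hN
    have hN0 : ((N:ℝ)) ≠ 0 := by
      have : (1:ℝ) ≤ (N:ℝ) := by exact_mod_cast hN
      linarith
    rw [hdetBr' N, hdetM₀' N, hκ'N N]
    rcases eq_or_ne (κ N) 0 with hκ0 | hκ0
    · simp [s, hκ0]
    · field_simp [s]
      have hs' : s N * κ N = (Br N).det - (M₀ N).det := div_mul_cancel₀ _ hκ0
      have hNa : (N:ℝ) * (1 / (N:ℝ)) = 1 := by field_simp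
      linear_combination ((1 / (N:ℝ)) ^ m) * hs' - ((1 / (N:ℝ)) ^ m * ((Br N).det - (M₀ N).det)) * hNa
  have T5 : Tendsto (fun N => s N / (N:ℝ)) atTop (nhds 0) := by
    have hM₀det : Tendsto (fun N => (M₀' N).det) atTop (nhds 1) := by
      have := (hdetcont.tendsto (C * Cᵀ)).comp T3
      simpa [Matrix.det_mul, hC, hCT, Function.comp_def] using this
    have h := (T2.sub hM₀det).div T4 ha
    have h0 : ((1:ℝ) - 1) / a = 0 := by simp
    rw [h0] at h
    exact h.congr' (by filter_upwards [eventually_ge_atTop 1] with N hN using (hsN N hN).symm)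
  set E : Matrix (Fin (m+1)) (Fin (m+1)) ℝ := Matrix.single 0 0 1 with hE
  set M : ℕ → Matrix (Fin (m+1)) (Fin (m+1)) ℝ := fun N => M₀ N + s N • E with hM
  set C' : ℕ → Matrix (Fin (m+1)) (Fin (m+1)) ℝ := fun N => M N * (Br N)⁻¹ with hC'def
  have hMup : ∀ N, M N = (M₀ N).updateRow 0 ((M₀ N) 0 + s N • e) := by
    intro N
    ext i j
    by_cases hi : i = 0 <;> by_cases hj : j = 0 <;>
      simp [M, E, e, Matrix.single, Matrix.updateRow_apply, Pi.single_apply, hi, hj,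
        eq_comm]
  have hdetM : ∀ N, κ N ≠ 0 → (M N).det = (Br N).det := by
    intro N hκ0
    rw [hMup N, Matrix.det_updateRow_add, Matrix.det_updateRow_smul,
      Matrix.updateRow_eq_self]
    have hcan : s N * κ N = (Br N).det - (M₀ N).det := div_mul_cancel₀ _ hκ0
    rw [hcan]
    ring
  have hMskew : ∀ N, M N - (M N)ᵀ = D := by
    intro N
    have hDij : ∀ i j, D i j = -D j i := by
      intro i j
      have := congrFun (congrFun hD j) i
      simpa [Matrix.transpose_apply, Matrix.neg_apply] using this
    ext i j
    have hEsym : E i j = E j i := by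
      simp [E, Matrix.single, and_comm]
    have hd : D j i = -D i j := hDij j i
    simp only [M, M₀, Matrix.sub_apply, Matrix.add_apply, Matrix.smul_apply,
      Matrix.transpose_apply, smul_eq_mul]
    rw [hEsym, hd]
    ring
  have hC'B : ∀ N, (Br N).det ≠ 0 → C' N * Br N = M N := by
    intro N h
    rw [hC'def]
    rw [Matrix.mul_assoc, Matrix.nonsing_inv_mul _ (isUnit_iff_ne_zero.mpr h), Matrix.mul_one]
  have hskewD : ∀ N, (Br N).det ≠ 0 → C' N * Br N - (Br N)ᵀ * (C' N)ᵀ = D := by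
    intro N h
    have h1 := hC'B N h
    have h2 : (Br N)ᵀ * (C' N)ᵀ = (M N)ᵀ := by rw [← Matrix.transpose_mul, h1]
    rw [h1, h2]
    exact hMskew N
  have hdetC' : ∀ N, (Br N).det ≠ 0 → κ N ≠ 0 → (C' N).det = 1 := by
    intro N h hκ0
    rw [hC'def]
    rw [Matrix.det_mul, Matrix.det_nonsing_inv, hdetM N hκ0, Ring.inverse_eq_inv,
      mul_inv_cancel₀ h]
  have T7 : Tendsto (fun N => (Br' N)⁻¹) atTop (nhds ((Cᵀ)⁻¹)) := by
    have hadj : Tendsto (fun N => (Br' N).adjugate) atTop (nhds ((Cᵀ).adjugate)) :=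
      ((continuous_id.matrix_adjugate).tendsto Cᵀ).comp T1
    have hinv : Tendsto (fun N => ((Br' N).det)⁻¹) atTop (nhds ((1:ℝ)⁻¹)) :=
      T2.inv₀ one_ne_zero
    have h1 := hinv.smul hadj
    have h2 : ∀ N, (Br' N)⁻¹ = ((Br' N).det)⁻¹ • (Br' N).adjugate := by
      intro N
      rw [Matrix.inv_def, Ring.inverse_eq_inv]
    have h3 : ((1:ℝ))⁻¹ • (Cᵀ).adjugate = (Cᵀ)⁻¹ := by
      rw [Matrix.inv_def, Ring.inverse_eq_inv, hCT]
    rw [h3] at h1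
    exact h1.congr (fun N => (h2 N).symm)
  have T6 : Tendsto (fun N : ℕ => ((N:ℝ))⁻¹ • M N) atTop (nhds (C * Cᵀ)) := by
    have h1 : ∀ N : ℕ, ((N:ℝ))⁻¹ • M N = M₀' N + (s N / (N:ℝ)) • E := by
      intro N
      ext i j
      simp [M, M₀', Matrix.smul_apply, Matrix.add_apply, div_eq_mul_inv]
      ring
    have h2 := T3.add (T5.smul_const E)
    rw [zero_smul, add_zero] at h2
    exact h2.congr (fun N => (h1 N).symm)
  have T8 : Tendsto C' atTop (nhds C) := by
    have hmul : Tendsto (fun N : ℕ => (((N:ℝ))⁻¹ • M N) * (Br' N)⁻¹) atTop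
        (nhds ((C * Cᵀ) * (Cᵀ)⁻¹)) := T6.mul T7
    have hlim : (C * Cᵀ) * (Cᵀ)⁻¹ = C := by
      rw [Matrix.mul_assoc,
        Matrix.mul_nonsing_inv _ (isUnit_iff_ne_zero.mpr (by rw [hCT]; exact one_ne_zero)),
        Matrix.mul_one]
    rw [hlim] at hmul
    apply hmul.congr'
    filter_upwards [E1, eventually_ge_atTop 1] with N hdet hN
    have hN0 : ((N:ℝ)) ≠ 0 := by
      have : (1:ℝ) ≤ (N:ℝ) := by exact_mod_cast hN
      linarith
    have hBrdet : (Br N).det ≠ 0 := by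
      intro h0
      rw [hdetBr' N, h0, mul_zero] at hdet
      exact hdet rfl
    have hBr'inv : (Br' N)⁻¹ = (N:ℝ) • (Br N)⁻¹ := by
      apply Matrix.inv_eq_right_inv
      rw [hBr']
      rw [Matrix.smul_mul, Matrix.mul_smul, smul_smul, inv_mul_cancel₀ hN0, one_smul,
        Matrix.mul_nonsing_inv _ (isUnit_iff_ne_zero.mpr hBrdet)]
    rw [hBr'inv, Matrix.smul_mul, Matrix.mul_smul, smul_smul, inv_mul_cancel₀ hN0, one_smul]
  have Tfin : Tendsto (fun N => Matrix.fromBlocks 0 (-(C' N)ᵀ) (C' N) D) atTop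
      (nhds (Matrix.fromBlocks 0 (-Cᵀ) C D)) := by
    have hcont : Continuous fun P : Matrix (Fin (m+1)) (Fin (m+1)) ℝ =>
        Matrix.fromBlocks 0 (-Pᵀ) P D :=
      Continuous.matrix_fromBlocks continuous_const
        (continuous_id.matrix_transpose.neg) continuous_id continuous_const
    exact (hcont.tendsto C).comp T8
  apply mem_closure_of_tendsto Tfin
  filter_upwards [E1, E2, eventually_ge_atTop 1] with N hdet hκ'0 hN
  have hN0 : ((N:ℝ)) ≠ 0 := by
    have : (1:ℝ) ≤ (N:ℝ) := by exact_mod_cast hN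
    linarith
  have hBrdet : (Br N).det ≠ 0 := by
    intro h0
    rw [hdetBr' N, h0, mul_zero] at hdet
    exact hdet rfl
  have hκ0 : κ N ≠ 0 := by
    intro h0
    rw [hκ'N N, h0, mul_zero] at hκ'0
    exact hκ'0 rfl
  refine ⟨C' N, 1, Bz N, hdetC' N hBrdet hκ0, Matrix.det_one, ?_⟩
  have hmap1 : ((1 : Matrix (Fin (m+1)) (Fin (m+1)) ℤ).map (Int.cast : ℤ → ℝ)) = 1 :=
    Matrix.map_one _ Int.cast_zero Int.cast_one
  have hBmap : ((Bz N).map (Int.cast : ℤ → ℝ)) = Br N := rfl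
  rw [hmap1, hBmap]
  have hblocks : (Matrix.fromBlocks 1 (Br N) 0 1)ᵀ *
        Matrix.fromBlocks 0 (-(C' N)ᵀ) (C' N) 0 * Matrix.fromBlocks 1 (Br N) 0 1
      = Matrix.fromBlocks 0 (-(C' N)ᵀ) (C' N) (C' N * Br N - (Br N)ᵀ * (C' N)ᵀ) := by
    rw [Matrix.fromBlocks_transpose, Matrix.fromBlocks_multiply, Matrix.fromBlocks_multiply]
    simp [Matrix.mul_one, Matrix.one_mul, Matrix.mul_zero, Matrix.zero_mul, add_zero,
      zero_add, Matrix.transpose_one, Matrix.transpose_zero, sub_eq_add_neg,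
      Matrix.neg_mul, Matrix.mul_neg]
  rw [hblocks, hskewD N hBrdet]
end
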